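/- For every real a > 0, ∫₁^∞ K₀( a (x²+1)/x ) dx = (π/(4a)) e^{−2a} + (1/(2a)) ∫_{2a}^∞ K₀(y) dy. -/

import Mathlib

open MeasureTheory Real Set Filter Topology intervalIntegral

/-- Modified Bessel function of the second kind, integral representation. -/
noncomputable def besselK (ν z : ℝ) : ℝ :=
  ∫ t in Set.Ioi (0:ℝ), Real.exp (-z * Real.cosh t) * Real.cosh (ν * t)

lemma besselK0 (z : ℝ) : besselK 0 z = ∫ t in Ioi (0:ℝ), Real.exp (-(z * Real.cosh t)) := by
  unfold besselK
  simp [neg_mul]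

lemma cosh_lower (t : ℝ) (ht : 0 ≤ t) : 1 + t^2/2 ≤ Real.cosh t := by
  have h1 : Real.cosh t = 1 + 2 * Real.sinh (t/2) ^ 2 := by
    have := Real.cosh_two_mul (t/2)
    have h2 := Real.cosh_sq (t/2)
    rw [show 2 * (t/2) = t by ring] at this
    rw [this, h2]; ring
  have h3 : t/2 ≤ Real.sinh (t/2) := by
    rcases eq_or_lt_of_le ht with h | h
    · simp [← h]
    · exact (Real.self_lt_sinh_iff.2 (by linarith)).le
  have h4 : (t/2)^2 ≤ Real.sinh (t/2)^2 := by
    apply sq_le_sq' (by nlinarith) h3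
  nlinarith

lemma exp_bound {c t : ℝ} (hc : 0 < c) (ht : 0 ≤ t) :
    Real.exp (-(c * Real.cosh t)) * Real.exp t ≤ Real.exp (2/c) * Real.exp (-t) := by
  rw [← Real.exp_add, ← Real.exp_add]
  apply Real.exp_le_exp.2
  have h1 := cosh_lower t ht
  have h2 : c * (1 + t^2/2) ≤ c * Real.cosh t := by nlinarith
  have h3 : 0 < 2/c := by positivity
  have key : 2*t ≤ c * (1 + t^2/2) + 2/c := by
    have h4 : c * (2*t) ≤ c * (c * (1 + t^2/2) + 2/c) := by
      have : c * (2/c) = 2 := by field_simp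
      nlinarith [sq_nonneg (c*t - 2), sq_nonneg c]
    exact le_of_mul_le_mul_left h4 hc
  linarith

lemma integrableOn_exp_cosh_mul {c : ℝ} (hc : 0 < c) {φ : ℝ → ℝ} (hφ : Continuous φ)
    (hb : ∀ t, 0 ≤ t → |φ t| ≤ Real.exp t) :
    IntegrableOn (fun t => Real.exp (-(c * Real.cosh t)) * φ t) (Ioi (0:ℝ)) := by
  apply Integrable.mono' (((exp_neg_integrableOn_Ioi 0 one_pos)).const_mul (Real.exp (2/c)))
  · exact ((Real.continuous_exp.comp
      (continuous_const.mul Real.continuous_cosh).neg).mul hφ).aestronglyMeasurable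
  · filter_upwards [ae_restrict_mem measurableSet_Ioi] with t ht
    have ht' : (0:ℝ) ≤ t := le_of_lt ht
    calc ‖Real.exp (-(c * Real.cosh t)) * φ t‖
        ≤ Real.exp (-(c * Real.cosh t)) * Real.exp t := by
          rw [norm_mul, Real.norm_eq_abs, Real.norm_eq_abs, abs_of_pos (Real.exp_pos _)]
          exact mul_le_mul_of_nonneg_left (hb t ht') (Real.exp_pos _).le
      _ ≤ Real.exp (2/c) * Real.exp (-t) := exp_bound hc ht'
      _ = Real.exp (2/c) * Real.exp (-1 * t) := by rw [neg_one_mul]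
lemma one_le_exp_self (t : ℝ) (ht : 0 ≤ t) : |(1:ℝ)| ≤ Real.exp t := by
  rw [abs_one]; exact Real.one_le_exp ht

lemma cosh_abs_le_exp : ∀ t : ℝ, 0 ≤ t → |Real.cosh t| ≤ Real.exp t := by
  intro t ht
  rw [abs_of_pos (Real.cosh_pos t), Real.cosh_eq]
  have h1 : Real.exp (-t) ≤ Real.exp t := Real.exp_le_exp.2 (by linarith)
  linarith

lemma sinh_abs_le_exp : ∀ t : ℝ, 0 ≤ t → |Real.sinh t| ≤ Real.exp t := by
  intro t ht
  rw [abs_of_nonneg (by simpa using Real.sinh_le_sinh.2 ht), Real.sinh_eq]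
  have h1 : 0 < Real.exp (-t) := Real.exp_pos _
  have h2 : 0 < Real.exp t := Real.exp_pos _
  linarith

lemma intOn_one {c : ℝ} (hc : 0 < c) :
    IntegrableOn (fun t => Real.exp (-(c * Real.cosh t))) (Ioi (0:ℝ)) := by
  simpa using integrableOn_exp_cosh_mul hc continuous_const one_le_exp_self

lemma besselK0_nonneg (z : ℝ) : 0 ≤ besselK 0 z := by
  rw [besselK0]
  exact setIntegral_nonneg measurableSet_Ioi fun t _ => (Real.exp_pos _).le

lemma besselK0_bound {a : ℝ} (ha : 0 < a) (u : ℝ) :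
    besselK 0 (2 * a * Real.cosh u) ≤ Real.exp (-(a * Real.cosh u)) * besselK 0 a := by
  rw [besselK0, besselK0, ← MeasureTheory.integral_const_mul]
  have hcu : 0 < Real.cosh u := Real.cosh_pos u
  apply setIntegral_mono_on
  · exact intOn_one (by nlinarith [Real.cosh_pos u])
  · exact (intOn_one ha).const_mul _
  · exact measurableSet_Ioi
  · intro t _
    rw [← Real.exp_add, Real.exp_le_exp]
    have h1 := Real.one_le_cosh u
    have h2 := Real.one_le_cosh t
    nlinarith [mul_nonneg ha.le (mul_nonneg (sub_nonneg.2 h1) (sub_nonneg.2 h2))]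

lemma K_meas (a : ℝ) :
    AEStronglyMeasurable (fun u => besselK 0 (2 * a * Real.cosh u))
      (volume.restrict (Ioi (0:ℝ))) := by
  have : (fun u => besselK 0 (2 * a * Real.cosh u))
      = fun u => ∫ t, (fun p : ℝ × ℝ => Real.exp (-(2 * a * Real.cosh p.1 * Real.cosh p.2)))
          (u, t) ∂(volume.restrict (Ioi (0:ℝ))) := by
    funext u; rw [besselK0]
  rw [this]
  exact (StronglyMeasurable.integral_prod_right
    (Continuous.stronglyMeasurable (by fun_prop))).aestronglyMeasurable

lemma int_coshK {a : ℝ} (ha : 0 < a) :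
    IntegrableOn (fun u => Real.cosh u * besselK 0 (2 * a * Real.cosh u)) (Ioi (0:ℝ)) := by
  apply Integrable.mono'
    (((integrableOn_exp_cosh_mul ha Real.continuous_cosh
        cosh_abs_le_exp).const_mul
      (besselK 0 a)))
  · exact (Real.continuous_cosh.aestronglyMeasurable).mul (K_meas a)
  · filter_upwards [ae_restrict_mem measurableSet_Ioi] with u hu
    have h1 : 0 ≤ besselK 0 (2 * a * Real.cosh u) := besselK0_nonneg _
    have h2 := besselK0_bound ha u
    have h3 : (0:ℝ) < Real.cosh u := Real.cosh_pos u
    rw [Real.norm_eq_abs, abs_of_nonneg (by positivity)]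
    calc Real.cosh u * besselK 0 (2 * a * Real.cosh u)
        ≤ Real.cosh u * (Real.exp (-(a * Real.cosh u)) * besselK 0 a) := by
          exact mul_le_mul_of_nonneg_left h2 h3.le
      _ = besselK 0 a * (Real.exp (-(a * Real.cosh u)) * Real.cosh u) := by ring
lemma exp_image : Real.exp '' Ioi (0:ℝ) = Ioi 1 := by
  ext y
  constructor
  · rintro ⟨u, hu, rfl⟩
    have := Real.exp_lt_exp.2 (show (0:ℝ) < u from hu)
    simpa using this
  · intro hy
    have hy1 : 1 < y := hy
    exact ⟨Real.log y, Real.log_pos hy1, Real.exp_log (by linarith)⟩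

lemma step1 {a : ℝ} (ha : 0 < a) :
    ∫ x in Ioi (1:ℝ), besselK 0 (a * (x ^ 2 + 1) / x)
      = ∫ u in Ioi (0:ℝ), Real.exp u * besselK 0 (2 * a * Real.cosh u) := by
  rw [← exp_image,
    integral_image_eq_integral_abs_deriv_smul measurableSet_Ioi
      (fun x _ => (Real.hasDerivAt_exp x).hasDerivWithinAt)
      (Real.exp_injective.injOn) (fun x => besselK 0 (a * (x ^ 2 + 1) / x))]
  apply setIntegral_congr_fun measurableSet_Ioi
  intro u _
  have he : (0:ℝ) < Real.exp u := Real.exp_pos u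
  simp only [smul_eq_mul]
  rw [abs_of_pos he]
  congr 1
  rw [Real.cosh_eq, Real.exp_neg]
  field_simp

lemma cosh_image {a : ℝ} (ha : 0 < a) :
    (fun u => 2 * a * Real.cosh u) '' Ioi (0:ℝ) = Ioi (2 * a) := by
  ext y
  constructor
  · rintro ⟨u, hu, rfl⟩
    have h1 : 1 < Real.cosh u := Real.one_lt_cosh.2 (ne_of_gt hu)
    have : 2 * a * 1 < 2 * a * Real.cosh u := by nlinarith
    simpa using this
  · intro hy
    have hy' : (1:ℝ) < y / (2 * a) := (one_lt_div (by linarith)).2 hy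
    set s := y / (2 * a) with hs
    have hs1 : 0 ≤ s ^ 2 - 1 := by nlinarith
    refine ⟨Real.arsinh (Real.sqrt (s ^ 2 - 1)), ?_, ?_⟩
    · rw [mem_Ioi, Real.arsinh_pos_iff]
      exact Real.sqrt_pos.2 (by nlinarith)
    · show 2 * a * Real.cosh (Real.arsinh (Real.sqrt (s ^ 2 - 1))) = y
      rw [Real.cosh_arsinh, Real.sq_sqrt hs1]
      rw [show 1 + (s ^ 2 - 1) = s ^ 2 by ring, Real.sqrt_sq (by linarith)]
      rw [hs]; field_simp

lemma cosh_injOn : InjOn Real.cosh (Ioi (0:ℝ)) := by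
  intro u hu v hv h
  have h1 : |u| = |v| := by
    by_contra hne
    rcases lt_or_gt_of_ne hne with hlt | hlt
    · exact absurd (Real.cosh_lt_cosh.2 hlt) (by rw [h]; exact lt_irrefl _)
    · exact absurd (Real.cosh_lt_cosh.2 hlt) (by rw [h]; exact lt_irrefl _)
  rwa [abs_of_pos hu, abs_of_pos hv] at h1

lemma step_sinh {a : ℝ} (ha : 0 < a) :
    ∫ y in Ioi (2 * a), besselK 0 y
      = 2 * a * ∫ u in Ioi (0:ℝ), Real.sinh u * besselK 0 (2 * a * Real.cosh u) := by
  rw [← cosh_image ha,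
    integral_image_eq_integral_abs_deriv_smul (f' := fun u => 2 * a * Real.sinh u)
      measurableSet_Ioi
      (fun u _ => (((Real.hasDerivAt_cosh u).const_mul (2 * a))).hasDerivWithinAt)
      (fun u hu v hv h => cosh_injOn hu hv (by
        have : (2*a) * Real.cosh u = (2*a) * Real.cosh v := h
        exact mul_left_cancel₀ (by positivity) this))
      (besselK 0), ← MeasureTheory.integral_const_mul]
  apply setIntegral_congr_fun measurableSet_Ioi
  intro u hu
  have hs : 0 < Real.sinh u := Real.sinh_pos_iff.2 hu
  simp only [smul_eq_mul]
  rw [abs_of_pos (by positivity)]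
  ring
lemma sinh_mul_image {c : ℝ} (hc : 0 < c) :
    (fun u => Real.sinh u * c) '' Ioi (0:ℝ) = Ioi 0 := by
  ext w
  constructor
  · rintro ⟨u, hu, rfl⟩
    have := Real.sinh_pos_iff.2 (show (0:ℝ) < u from hu)
    exact mul_pos this hc
  · intro hw
    have hw' : (0:ℝ) < w := hw
    refine ⟨Real.arsinh (w / c), ?_, ?_⟩
    · rw [mem_Ioi, Real.arsinh_pos_iff]
      positivity
    · show Real.sinh (Real.arsinh (w / c)) * c = w
      rw [Real.sinh_arsinh]
      field_simp

lemma sinh_image : Real.sinh '' Ioi (0:ℝ) = Ioi 0 := by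
  have := sinh_mul_image (one_pos)
  simpa using this

lemma fubini_swap {a : ℝ} (ha : 0 < a) :
    ∫ u in Ioi (0:ℝ), Real.cosh u * besselK 0 (2 * a * Real.cosh u)
      = ∫ t in Ioi (0:ℝ), ∫ u in Ioi (0:ℝ),
          Real.cosh u * Real.exp (-(2 * a * Real.cosh u * Real.cosh t)) := by
  have h1 : ∫ u in Ioi (0:ℝ), Real.cosh u * besselK 0 (2 * a * Real.cosh u)
      = ∫ u in Ioi (0:ℝ), ∫ t in Ioi (0:ℝ),
          Real.cosh u * Real.exp (-(2 * a * Real.cosh u * Real.cosh t)) := by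
    apply setIntegral_congr_fun measurableSet_Ioi
    intro u _
    show Real.cosh u * besselK 0 (2 * a * Real.cosh u) = _
    rw [besselK0, ← MeasureTheory.integral_const_mul]
  rw [h1]
  apply integral_integral_swap
  have hbd : Integrable (fun p : ℝ × ℝ =>
      (Real.exp (-(a * Real.cosh p.1)) * Real.cosh p.1) * Real.exp (-(a * Real.cosh p.2)))
      ((volume.restrict (Ioi (0:ℝ))).prod (volume.restrict (Ioi (0:ℝ)))) :=
    Integrable.mul_prod (integrableOn_exp_cosh_mul ha Real.continuous_cosh cosh_abs_le_exp)
      (by simpa [IntegrableOn] using integrableOn_exp_cosh_mul ha continuous_const one_le_exp_self)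
  apply Integrable.mono' hbd
  · exact Continuous.aestronglyMeasurable (by fun_prop)
  · rw [Measure.prod_restrict]
    filter_upwards [ae_restrict_mem (measurableSet_Ioi.prod measurableSet_Ioi)] with p hp
    obtain ⟨hp1, hp2⟩ := hp
    have hc1 : (0:ℝ) < Real.cosh p.1 := Real.cosh_pos p.1
    have hc2 : (0:ℝ) < Real.cosh p.2 := Real.cosh_pos p.2
    rw [Function.uncurry]
    rw [Real.norm_eq_abs, abs_of_nonneg (by positivity)]
    calc Real.cosh p.1 * Real.exp (-(2 * a * Real.cosh p.1 * Real.cosh p.2))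
        ≤ Real.cosh p.1 * (Real.exp (-(a * Real.cosh p.1)) * Real.exp (-(a * Real.cosh p.2))) := by
          apply mul_le_mul_of_nonneg_left _ hc1.le
          rw [← Real.exp_add, Real.exp_le_exp]
          have h1 : 1 ≤ Real.cosh p.1 := Real.one_le_cosh p.1
          have h2 : 1 ≤ Real.cosh p.2 := Real.one_le_cosh p.2
          nlinarith [mul_nonneg ha.le (mul_nonneg (sub_nonneg.2 h1) (sub_nonneg.2 h2))]
      _ = Real.exp (-(a * Real.cosh p.1)) * Real.cosh p.1 * Real.exp (-(a * Real.cosh p.2)) := by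
          ring

lemma inner_cov {a : ℝ} (t : ℝ) :
    ∫ u in Ioi (0:ℝ), Real.cosh u * Real.exp (-(2 * a * Real.cosh u * Real.cosh t))
      = ∫ w in Ioi (0:ℝ),
          Real.exp (-(2 * a * Real.sqrt (Real.cosh t ^ 2 + w ^ 2))) / Real.cosh t := by
  have hct : (0:ℝ) < Real.cosh t := Real.cosh_pos t
  have hinj : Function.Injective (fun u => Real.sinh u * Real.cosh t) :=
    fun x y h => Real.sinh_injective (mul_right_cancel₀ hct.ne' h)
  have key := integral_image_eq_integral_abs_deriv_smul
      (f := fun u => Real.sinh u * Real.cosh t) (f' := fun u => Real.cosh u * Real.cosh t)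
      (measurableSet_Ioi (a := (0:ℝ)))
      (fun u _ => ((Real.hasDerivAt_sinh u).mul_const _).hasDerivWithinAt)
      hinj.injOn
      (fun w => Real.exp (-(2 * a * Real.sqrt (Real.cosh t ^ 2 + w ^ 2))) / Real.cosh t)
  rw [sinh_mul_image hct] at key
  rw [key]
  apply setIntegral_congr_fun measurableSet_Ioi
  intro u _
  have hcu : (0:ℝ) < Real.cosh u := Real.cosh_pos u
  simp only [smul_eq_mul]
  have h1 : Real.cosh t ^ 2 + (Real.sinh u * Real.cosh t) ^ 2
      = (Real.cosh u * Real.cosh t) ^ 2 := by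
    rw [mul_pow, mul_pow, Real.cosh_sq u]; ring
  rw [h1, Real.sqrt_sq (by positivity), abs_of_pos (by positivity)]
  rw [show 2 * a * (Real.cosh u * Real.cosh t) = 2 * a * Real.cosh u * Real.cosh t from by ring]
  field_simp

lemma outer_cov {a : ℝ} :
    ∫ t in Ioi (0:ℝ), (∫ w in Ioi (0:ℝ),
        Real.exp (-(2 * a * Real.sqrt (Real.cosh t ^ 2 + w ^ 2))) / Real.cosh t)
      = ∫ r in Ioi (0:ℝ), (∫ w in Ioi (0:ℝ),
          Real.exp (-(2 * a * Real.sqrt (1 + r ^ 2 + w ^ 2))) / (1 + r ^ 2)) := by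
  have key := integral_image_eq_integral_abs_deriv_smul
      (f := Real.sinh) (f' := Real.cosh) (measurableSet_Ioi (a := (0:ℝ)))
      (fun u _ => (Real.hasDerivAt_sinh u).hasDerivWithinAt)
      Real.sinh_injective.injOn
      (fun r => ∫ w in Ioi (0:ℝ),
          Real.exp (-(2 * a * Real.sqrt (1 + r ^ 2 + w ^ 2))) / (1 + r ^ 2))
  rw [sinh_image] at key
  rw [key]
  apply setIntegral_congr_fun measurableSet_Ioi
  intro t _
  have hct : (0:ℝ) < Real.cosh t := Real.cosh_pos t
  simp only [smul_eq_mul]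
  have h1 : 1 + Real.sinh t ^ 2 = Real.cosh t ^ 2 := by rw [Real.cosh_sq]; ring
  rw [h1, abs_of_pos hct, ← MeasureTheory.integral_const_mul]
  apply setIntegral_congr_fun measurableSet_Ioi
  intro w _
  show Real.exp (-(2 * a * Real.sqrt (Real.cosh t ^ 2 + w ^ 2))) / Real.cosh t
      = Real.cosh t * (Real.exp (-(2 * a * Real.sqrt (Real.cosh t ^ 2 + w ^ 2)))
        / Real.cosh t ^ 2)
  field_simp

lemma arctan_image : Real.arctan '' Ioi (0:ℝ) = Ioo 0 (π/2) := by
  ext θ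
  constructor
  · rintro ⟨u, hu, rfl⟩
    have hu' : (0:ℝ) < u := hu
    refine ⟨?_, Real.arctan_lt_pi_div_two u⟩
    have := Real.arctan_strictMono hu'
    simpa using this
  · rintro ⟨h1, h2⟩
    refine ⟨Real.tan θ, Real.tan_pos_of_pos_of_lt_pi_div_two h1 h2,
      Real.arctan_tan (by linarith [Real.pi_pos]) h2⟩

lemma inv_sq_integral {c : ℝ} (hc : 0 < c) :
    ∫ u in Ioi (0:ℝ), 1 / (c ^ 2 + u ^ 2) = π / (2 * c) := by
  have hd : ∀ u : ℝ, HasDerivAt (fun v => Real.arctan (v / c) / c) (1 / (c ^ 2 + u ^ 2)) u := by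
    intro u
    have h := ((Real.hasDerivAt_arctan (u / c)).comp u ((hasDerivAt_id u).div_const c)).div_const c
    refine HasDerivAt.congr_deriv h ?_
    have h1 : (0:ℝ) < 1 + (u/c)^2 := by positivity
    field_simp
  have htends : Tendsto (fun v => Real.arctan (v / c) / c) atTop (𝓝 (π / 2 / c)) := by
    apply Filter.Tendsto.div_const
    apply (Real.tendsto_arctan_atTop.mono_right nhdsWithin_le_nhds).comp
    exact (tendsto_id.atTop_div_const hc)
  have := integral_Ioi_of_hasDerivAt_of_nonneg
    (a := (0:ℝ)) (g := fun v => Real.arctan (v / c) / c) (g' := fun u => 1 / (c ^ 2 + u ^ 2))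
    (((Real.continuous_arctan.comp (continuous_id.div_const c)).div_const c).continuousWithinAt)
    (fun x _ => hd x) (fun x _ => by positivity) htends
  rw [this]
  rw [zero_div, Real.arctan_zero, zero_div, sub_zero, div_div]

lemma trigT (b : ℝ) :
    ∫ θ in Ioo (-π) π, 1 / (1 + b ^ 2 * Real.cos θ ^ 2)
      = 2 * π / Real.sqrt (1 + b ^ 2) := by
  set f : ℝ → ℝ := fun θ => 1 / (1 + b ^ 2 * Real.cos θ ^ 2) with hf
  have hcont : Continuous f := by
    apply continuous_const.div (by fun_prop)
    intro θ; positivity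
  have hInt : ∀ x y : ℝ, IntervalIntegrable f volume x y :=
    fun x y => hcont.intervalIntegrable x y
  set c : ℝ := Real.sqrt (1 + b ^ 2) with hcdef
  have hc : 0 < c := Real.sqrt_pos.2 (by positivity)
  have hc2 : c ^ 2 = 1 + b ^ 2 := Real.sq_sqrt (by positivity)
  -- core integral over (0, π/2)
  have core : ∫ θ in Ioo (0:ℝ) (π/2), f θ = π / (2 * c) := by
    have key := integral_image_eq_integral_abs_deriv_smul
        (f := Real.arctan) (f' := fun u => 1 / (1 + u ^ 2)) (measurableSet_Ioi (a := (0:ℝ)))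
        (fun u _ => (Real.hasDerivAt_arctan u).hasDerivWithinAt)
        Real.arctan_injective.injOn f
    rw [arctan_image] at key
    rw [key, ← inv_sq_integral hc]
    apply setIntegral_congr_fun measurableSet_Ioi
    intro u _
    simp only [smul_eq_mul, hf]
    have h1 : (0:ℝ) < 1 + u ^ 2 := by positivity
    rw [abs_of_pos (by positivity), Real.cos_arctan, hc2]
    rw [div_pow, one_pow, Real.sq_sqrt h1.le]
    field_simp
    ring
  -- symmetries
  have hfneg : (fun θ => f (-θ)) = f := by
    funext θ; simp only [hf, Real.cos_neg]
  have hfpi : (fun θ => f (π - θ)) = f := by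
    funext θ; simp only [hf, Real.cos_pi_sub]; ring_nf
  have h02 : ∫ θ in (0:ℝ)..(π/2), f θ = π / (2 * c) := by
    rw [integral_of_le (by linarith [Real.pi_pos]), integral_Ioc_eq_integral_Ioo, core]
  have h2pi : ∫ θ in (π/2)..π, f θ = π / (2 * c) := by
    have h := integral_comp_sub_left (a := 0) (b := π/2) f π
    simp only [hfpi] at h
    rw [show π - π/2 = π/2 by ring, show π - (0:ℝ) = π by ring] at h
    rw [← h, h02]
  have h0pi : ∫ θ in (0:ℝ)..π, f θ = π / c := by
    rw [← integral_add_adjacent_intervals (hInt 0 (π/2)) (hInt (π/2) π), h02, h2pi]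
    ring
  have hneg : ∫ θ in (-π)..(0:ℝ), f θ = π / c := by
    have h := integral_comp_neg (a := 0) (b := π) f
    simp only [hfneg] at h
    rw [neg_zero] at h
    rw [← h, h0pi]
  have : ∫ θ in (-π)..π, f θ = 2 * π / c := by
    rw [← integral_add_adjacent_intervals (hInt (-π) 0) (hInt 0 π), hneg, h0pi]
    ring
  rw [← integral_Ioc_eq_integral_Ioo, ← integral_of_le (by linarith [Real.pi_pos]), this]

lemma int_exp_abs {c : ℝ} (hc : 0 < c) :
    Integrable (fun x : ℝ => Real.exp (-(c * |x|))) := by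
  have hIoi : IntegrableOn (fun x : ℝ => Real.exp (-(c * |x|))) (Ioi 0) := by
    apply ((exp_neg_integrableOn_Ioi 0 hc)).congr_fun ?_ measurableSet_Ioi
    intro x hx
    show Real.exp (-c * x) = Real.exp (-(c * |x|))
    rw [abs_of_pos hx, neg_mul]
  have int_Iic : IntegrableOn (fun x : ℝ => Real.exp (-(c * |x|))) (Iic 0) := by
    rw [← Measure.map_neg_eq_self (volume : Measure ℝ)]
    have m : MeasurableEmbedding fun x : ℝ => -x := (Homeomorph.neg ℝ).measurableEmbedding
    rw [m.integrableOn_map_iff]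
    simp_rw [Function.comp_def, abs_neg, neg_preimage, neg_Iic, neg_zero]
    exact Iff.mpr integrableOn_Ici_iff_integrableOn_Ioi hIoi
  have := int_Iic.union hIoi
  rwa [Iic_union_Ioi, integrableOn_univ] at this

lemma phi_integrable {a : ℝ} (ha : 0 < a) :
    Integrable (fun p : ℝ × ℝ =>
      Real.exp (-(2 * a * Real.sqrt (1 + p.1 ^ 2 + p.2 ^ 2))) / (1 + p.1 ^ 2)) := by
  rw [Measure.volume_eq_prod]
  apply Integrable.mono' (Integrable.mul_prod (int_exp_abs ha) (int_exp_abs ha))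
  · exact Continuous.aestronglyMeasurable (by fun_prop (disch := intro p; positivity))
  · apply Filter.Eventually.of_forall
    intro p
    have h1 : (0:ℝ) < 1 + p.1 ^ 2 := by positivity
    have hs : |p.1| + |p.2| ≤ 2 * Real.sqrt (1 + p.1 ^ 2 + p.2 ^ 2) := by
      have e1 : |p.1| ≤ Real.sqrt (1 + p.1 ^ 2 + p.2 ^ 2) := by
        rw [← Real.sqrt_sq_eq_abs]
        exact Real.sqrt_le_sqrt (by nlinarith [sq_nonneg p.2])
      have e2 : |p.2| ≤ Real.sqrt (1 + p.1 ^ 2 + p.2 ^ 2) := by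
        rw [← Real.sqrt_sq_eq_abs]
        exact Real.sqrt_le_sqrt (by nlinarith [sq_nonneg p.1])
      linarith
    rw [Real.norm_eq_abs, abs_of_nonneg (by positivity)]
    calc Real.exp (-(2 * a * Real.sqrt (1 + p.1 ^ 2 + p.2 ^ 2))) / (1 + p.1 ^ 2)
        ≤ Real.exp (-(2 * a * Real.sqrt (1 + p.1 ^ 2 + p.2 ^ 2))) := by
          apply div_le_self (Real.exp_pos _).le (by nlinarith [sq_nonneg p.1])
      _ ≤ Real.exp (-(a * |p.1|) + -(a * |p.2|)) := by
          apply Real.exp_le_exp.2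
          have h2 : a * (|p.1| + |p.2|) ≤ a * (2 * Real.sqrt (1 + p.1 ^ 2 + p.2 ^ 2)) :=
            mul_le_mul_of_nonneg_left hs ha.le
          nlinarith
      _ = Real.exp (-(a * |p.1|)) * Real.exp (-(a * |p.2|)) := Real.exp_add _ _

lemma plane_eq_quadrant {a : ℝ} (ha : 0 < a) :
    ∫ p : ℝ × ℝ, Real.exp (-(2 * a * Real.sqrt (1 + p.1 ^ 2 + p.2 ^ 2))) / (1 + p.1 ^ 2)
      = 4 * ∫ r in Ioi (0:ℝ), ∫ w in Ioi (0:ℝ),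
          Real.exp (-(2 * a * Real.sqrt (1 + r ^ 2 + w ^ 2))) / (1 + r ^ 2) := by
  have hΦ := phi_integrable ha
  rw [Measure.volume_eq_prod] at hΦ ⊢
  rw [integral_prod _ hΦ]
  have hstep1 : ∀ r : ℝ,
      (∫ w : ℝ, Real.exp (-(2 * a * Real.sqrt (1 + r ^ 2 + w ^ 2))) / (1 + r ^ 2))
        = 2 * ∫ w in Ioi (0:ℝ), Real.exp (-(2 * a * Real.sqrt (1 + r ^ 2 + w ^ 2))) / (1 + r ^ 2) := by
    intro r
    rw [← integral_comp_abs (f := fun w => Real.exp (-(2 * a * Real.sqrt (1 + r ^ 2 + w ^ 2))) / (1 + r ^ 2))]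
    congr 1
    funext w
    rw [sq_abs]
  calc ∫ r : ℝ, ∫ w : ℝ, Real.exp (-(2 * a * Real.sqrt (1 + r ^ 2 + w ^ 2))) / (1 + r ^ 2)
      = ∫ r : ℝ, 2 * ∫ w in Ioi (0:ℝ),
          Real.exp (-(2 * a * Real.sqrt (1 + r ^ 2 + w ^ 2))) / (1 + r ^ 2) := by
        congr 1; funext r; exact hstep1 r
    _ = 2 * ∫ r : ℝ, ∫ w in Ioi (0:ℝ),
          Real.exp (-(2 * a * Real.sqrt (1 + r ^ 2 + w ^ 2))) / (1 + r ^ 2) := MeasureTheory.integral_const_mul _ _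
    _ = 2 * (2 * ∫ r in Ioi (0:ℝ), ∫ w in Ioi (0:ℝ),
          Real.exp (-(2 * a * Real.sqrt (1 + r ^ 2 + w ^ 2))) / (1 + r ^ 2)) := by
        congr 1
        rw [← integral_comp_abs (f := fun r => ∫ w in Ioi (0:ℝ),
          Real.exp (-(2 * a * Real.sqrt (1 + r ^ 2 + w ^ 2))) / (1 + r ^ 2))]
        congr 1
        funext r
        rw [sq_abs]
    _ = 4 * ∫ r in Ioi (0:ℝ), ∫ w in Ioi (0:ℝ),
          Real.exp (-(2 * a * Real.sqrt (1 + r ^ 2 + w ^ 2))) / (1 + r ^ 2) := by ring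

lemma plane_polar {a : ℝ} (ha : 0 < a) :
    ∫ p : ℝ × ℝ, Real.exp (-(2 * a * Real.sqrt (1 + p.1 ^ 2 + p.2 ^ 2))) / (1 + p.1 ^ 2)
      = ∫ ρ in Ioi (0:ℝ),
          (ρ * Real.exp (-(2 * a * Real.sqrt (1 + ρ ^ 2)))) * (2 * π / Real.sqrt (1 + ρ ^ 2)) := by
  set Φ : ℝ × ℝ → ℝ :=
    fun p => Real.exp (-(2 * a * Real.sqrt (1 + p.1 ^ 2 + p.2 ^ 2))) / (1 + p.1 ^ 2) with hΦdef
  set F : ℝ × ℝ → ℝ :=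
    fun p => p.1 * (Real.exp (-(2 * a * Real.sqrt (1 + p.1 ^ 2)))
      / (1 + p.1 ^ 2 * Real.cos p.2 ^ 2)) with hFdef
  have hpt : ∀ p : ℝ × ℝ, p.1 • Φ (polarCoord.symm p) = F p := by
    intro p
    rw [polarCoord_symm_apply, smul_eq_mul]
    show p.1 * (Real.exp (-(2 * a * Real.sqrt (1 + (p.1 * Real.cos p.2) ^ 2
        + (p.1 * Real.sin p.2) ^ 2))) / (1 + (p.1 * Real.cos p.2) ^ 2)) = F p
    have h1 : 1 + (p.1 * Real.cos p.2) ^ 2 + (p.1 * Real.sin p.2) ^ 2 = 1 + p.1 ^ 2 := by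
      have h := Real.sin_sq_add_cos_sq p.2
      nlinarith [h]
    rw [h1, mul_pow]
  have hstep : ∫ p : ℝ × ℝ, Φ p = ∫ p in polarCoord.target, F p := by
    rw [← integral_comp_polarCoord_symm Φ]
    exact setIntegral_congr_fun polarCoord.open_target.measurableSet fun p _ => hpt p
  -- integrability of F on the target
  have hbnd : Integrable (fun z : ℝ × ℝ => (1/a) * Real.exp (-a * z.1) * 1)
      ((volume.restrict (Ioi (0:ℝ))).prod (volume.restrict (Ioo (-π) π))) := by
    exact Integrable.mul_prod (f := fun x => 1/a * Real.exp (-a * x)) (g := fun _ => (1:ℝ))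
      ((exp_neg_integrableOn_Ioi 0 ha).const_mul (1/a))
      (integrableOn_const measure_Ioo_lt_top.ne)
  have hF : IntegrableOn F (Ioi (0:ℝ) ×ˢ Ioo (-π) π) ((volume : Measure ℝ).prod volume) := by
    rw [IntegrableOn, ← Measure.prod_restrict]
    apply Integrable.mono' hbnd
    · exact Continuous.aestronglyMeasurable (by fun_prop (disch := intro p; positivity))
    · rw [Measure.prod_restrict]
      filter_upwards [ae_restrict_mem (measurableSet_Ioi.prod measurableSet_Ioo)] with p hp
      obtain ⟨hp1, _⟩ := hp
      have hρ : (0:ℝ) < p.1 := hp1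
      have hsq : p.1 ≤ Real.sqrt (1 + p.1 ^ 2) := by
        conv_lhs => rw [← Real.sqrt_sq hρ.le]
        exact Real.sqrt_le_sqrt (by nlinarith)
      have hden : (1:ℝ) ≤ 1 + p.1 ^ 2 * Real.cos p.2 ^ 2 := by nlinarith [sq_nonneg (p.1 * Real.cos p.2)]
      have hkey : a * p.1 ≤ Real.exp (a * p.1) := by
        have := Real.add_one_le_exp (a * p.1); linarith
      rw [Real.norm_eq_abs, abs_of_nonneg (by positivity)]
      calc F p ≤ p.1 * Real.exp (-(2 * a * Real.sqrt (1 + p.1 ^ 2))) := by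
            apply mul_le_mul_of_nonneg_left _ hρ.le
            apply div_le_self (Real.exp_pos _).le hden
        _ ≤ p.1 * Real.exp (-(2 * a * p.1)) := by
            apply mul_le_mul_of_nonneg_left _ hρ.le
            apply Real.exp_le_exp.2
            nlinarith
        _ = (1/a) * ((a * p.1) * Real.exp (-(2 * a * p.1))) := by field_simp
        _ ≤ (1/a) * (Real.exp (a * p.1) * Real.exp (-(2 * a * p.1))) := by
            apply mul_le_mul_of_nonneg_left
              (mul_le_mul_of_nonneg_right hkey (Real.exp_pos _).le) (by positivity)
        _ = (1/a) * Real.exp (-a * p.1) * 1 := by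
            rw [← Real.exp_add, mul_one, mul_assoc]
            ring_nf
  have hiter : ∫ p in Ioi (0:ℝ) ×ˢ Ioo (-π) π, F p
      = ∫ ρ in Ioi (0:ℝ), ∫ θ in Ioo (-π) π, F (ρ, θ) := by
    rw [Measure.volume_eq_prod]
    exact setIntegral_prod F hF
  rw [hstep, polarCoord_target, hiter]
  apply setIntegral_congr_fun measurableSet_Ioi
  intro ρ _
  show (∫ θ in Ioo (-π) π, F (ρ, θ)) = _
  have h2 : ∫ θ in Ioo (-π) π, F (ρ, θ)
      = (ρ * Real.exp (-(2 * a * Real.sqrt (1 + ρ ^ 2))))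
        * ∫ θ in Ioo (-π) π, 1 / (1 + ρ ^ 2 * Real.cos θ ^ 2) := by
    rw [← MeasureTheory.integral_const_mul]
    apply setIntegral_congr_fun measurableSet_Ioo
    intro θ _
    show F (ρ, θ) = _
    rw [hFdef]
    field_simp
  rw [h2, trigT]

lemma rho_integral {a : ℝ} (ha : 0 < a) :
    ∫ ρ in Ioi (0:ℝ),
        (ρ * Real.exp (-(2 * a * Real.sqrt (1 + ρ ^ 2)))) * (2 * π / Real.sqrt (1 + ρ ^ 2))
      = (π / a) * Real.exp (-(2 * a)) := by
  have hd : ∀ ρ : ℝ, HasDerivAt (fun ρ => -(π/a) * Real.exp (-(2 * a * Real.sqrt (1 + ρ ^ 2))))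
      ((ρ * Real.exp (-(2 * a * Real.sqrt (1 + ρ ^ 2)))) * (2 * π / Real.sqrt (1 + ρ ^ 2))) ρ := by
    intro ρ
    have h1 : (0:ℝ) < 1 + ρ ^ 2 := by positivity
    have hs : (0:ℝ) < Real.sqrt (1 + ρ ^ 2) := Real.sqrt_pos.2 h1
    have hsq : HasDerivAt (fun ρ : ℝ => 1 + ρ ^ 2) (2 * ρ) ρ := by
      simpa using ((hasDerivAt_pow 2 ρ).const_add 1)
    have hsqrt := (Real.hasDerivAt_sqrt h1.ne').comp ρ hsq
    have hneg := (hsqrt.const_mul (2 * a)).neg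
    have hexp := (Real.hasDerivAt_exp (-(2 * a * Real.sqrt (1 + ρ ^ 2)))).comp ρ hneg
    have := hexp.const_mul (-(π/a))
    refine HasDerivAt.congr_deriv this ?_
    field_simp
  have hmono : ∀ ρ : ℝ, ρ ≤ Real.sqrt (1 + ρ ^ 2) := by
    intro ρ
    rcases le_or_gt ρ 0 with h | h
    · exact le_trans h (Real.sqrt_nonneg _)
    · conv_lhs => rw [← Real.sqrt_sq h.le]
      exact Real.sqrt_le_sqrt (by nlinarith)
  have h1 : Tendsto (fun ρ : ℝ => Real.sqrt (1 + ρ ^ 2)) atTop atTop :=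
    tendsto_atTop_mono hmono tendsto_id
  have h2 : Tendsto (fun ρ : ℝ => -(2 * a * Real.sqrt (1 + ρ ^ 2))) atTop atBot :=
    Filter.tendsto_neg_atTop_atBot.comp (h1.const_mul_atTop (by positivity))
  have h3 : Tendsto (fun ρ : ℝ => -(π/a) * Real.exp (-(2 * a * Real.sqrt (1 + ρ ^ 2))))
      atTop (𝓝 0) := by
    have := (Real.tendsto_exp_atBot.comp h2).const_mul (-(π/a))
    simpa using this
  have hval := integral_Ioi_of_hasDerivAt_of_nonneg (a := (0:ℝ))
    ((hd 0).continuousAt.continuousWithinAt) (fun x _ => hd x)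
    (fun x hx => by
      have hx' : (0:ℝ) < x := hx
      apply mul_nonneg (mul_nonneg hx'.le (Real.exp_pos _).le)
      apply div_nonneg (by positivity) (Real.sqrt_nonneg _)) h3
  rw [hval, show Real.sqrt (1 + (0:ℝ) ^ 2) = 1 by
    rw [show (1:ℝ) + 0 ^ 2 = 1 by norm_num, Real.sqrt_one]]
  ring

lemma int_sinhK {a : ℝ} (ha : 0 < a) :
    IntegrableOn (fun u => Real.sinh u * besselK 0 (2 * a * Real.cosh u)) (Ioi (0:ℝ)) := by
  apply Integrable.mono'
    (((integrableOn_exp_cosh_mul ha Real.continuous_sinh sinh_abs_le_exp)).const_mul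
      (besselK 0 a))
  · exact (Real.continuous_sinh.aestronglyMeasurable).mul (K_meas a)
  · filter_upwards [ae_restrict_mem measurableSet_Ioi] with u hu
    have h1 : 0 ≤ besselK 0 (2 * a * Real.cosh u) := besselK0_nonneg _
    have h2 := besselK0_bound ha u
    have h3 : (0:ℝ) < Real.sinh u := Real.sinh_pos_iff.2 hu
    rw [Real.norm_eq_abs, abs_of_nonneg (by positivity)]
    calc Real.sinh u * besselK 0 (2 * a * Real.cosh u)
        ≤ Real.sinh u * (Real.exp (-(a * Real.cosh u)) * besselK 0 a) :=
          mul_le_mul_of_nonneg_left h2 h3.le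
      _ = besselK 0 a * (Real.exp (-(a * Real.cosh u)) * Real.sinh u) := by ring

lemma cosh_part {a : ℝ} (ha : 0 < a) :
    ∫ u in Ioi (0:ℝ), Real.cosh u * besselK 0 (2 * a * Real.cosh u)
      = π / (4 * a) * Real.exp (-2 * a) := by
  rw [fubini_swap ha]
  have h1 : ∫ t in Ioi (0:ℝ), ∫ u in Ioi (0:ℝ),
        Real.cosh u * Real.exp (-(2 * a * Real.cosh u * Real.cosh t))
      = ∫ t in Ioi (0:ℝ), ∫ w in Ioi (0:ℝ),
          Real.exp (-(2 * a * Real.sqrt (Real.cosh t ^ 2 + w ^ 2))) / Real.cosh t := by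
    apply setIntegral_congr_fun measurableSet_Ioi
    intro t _
    exact inner_cov t
  rw [h1, outer_cov]
  have h2 := plane_eq_quadrant ha
  have h3 := (plane_polar ha).trans (rho_integral ha)
  have h4 : (4:ℝ) * ∫ r in Ioi (0:ℝ), ∫ w in Ioi (0:ℝ),
      Real.exp (-(2 * a * Real.sqrt (1 + r ^ 2 + w ^ 2))) / (1 + r ^ 2)
      = (π / a) * Real.exp (-(2 * a)) := by rw [← h2, h3]
  have h5 : Real.exp (-2 * a) = Real.exp (-(2 * a)) := by rw [neg_mul]
  rw [h5]
  field_simp at h4 ⊢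
  linarith

theorem integral_besselK_zero (a : ℝ) (ha : 0 < a) :
    ∫ x in Set.Ioi (1:ℝ), besselK 0 (a * (x ^ 2 + 1) / x)
      = (π / (4 * a)) * Real.exp (-2 * a)
        + (1 / (2 * a)) * ∫ y in Set.Ioi (2 * a), besselK 0 y := by
  rw [step1 ha]
  have hsplit : ∫ u in Ioi (0:ℝ), Real.exp u * besselK 0 (2 * a * Real.cosh u)
      = (∫ u in Ioi (0:ℝ), Real.cosh u * besselK 0 (2 * a * Real.cosh u))
        + ∫ u in Ioi (0:ℝ), Real.sinh u * besselK 0 (2 * a * Real.cosh u) := by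
    rw [← integral_add (int_coshK ha) (int_sinhK ha)]
    apply setIntegral_congr_fun measurableSet_Ioi
    intro u _
    show Real.exp u * besselK 0 (2 * a * Real.cosh u) = _
    rw [← Real.cosh_add_sinh u]
    ring
  rw [hsplit, cosh_part ha]
  congr 1
  have h := step_sinh ha
  rw [h]
  field_simp
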